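/- Let A be a commutative ring, let x be a unit of A, and let e ≥ 1 and 1 ≤ a ≤ e be integers with x^e = 1. Then x^{a(a−1)/2} · ∏_{i=1}^{e} (x^i + 1) = (x^e + 1) · ∏_{i=1}^{a−1} (x^i + 1) · ∏_{i=1}^{e−a} (x^i + 1). -/

import Mathlib

/-- Let `A` be a commutative ring, `x` a unit of `A`, and `e ≥ 1`,
`1 ≤ a ≤ e` integers with `x^e = 1`.  Then
`x^{a(a−1)/2} · ∏_{i=1}^{e} (x^i + 1) = (x^e + 1) · ∏_{i=1}^{a−1} (x^i + 1) · ∏_{i=1}^{e−a} (x^i + 1)`. -/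
theorem pow_mul_prod_pow_add_one
    {A : Type*} [CommRing A] (x : A) (hx : IsUnit x) (e a : ℕ)
    (he : 1 ≤ e) (ha1 : 1 ≤ a) (hae : a ≤ e) (hxe : x ^ e = 1) :
    x ^ (a * (a - 1) / 2) * ∏ i ∈ Finset.Icc 1 e, (x ^ i + 1) =
      (x ^ e + 1) * (∏ i ∈ Finset.Icc 1 (a - 1), (x ^ i + 1)) *
        ∏ i ∈ Finset.Icc 1 (e - a), (x ^ i + 1) := by
  have hsplit : (∏ i ∈ Finset.Ioc 0 (e - a), (x ^ i + 1)) *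
      ∏ i ∈ Finset.Ioc (e - a) e, (x ^ i + 1) = ∏ i ∈ Finset.Icc 1 e, (x ^ i + 1) := by
    rw [← Finset.Icc_add_one_left_eq_Ioc, zero_add] at *
    exact Finset.prod_Ioc_consecutive _ (Nat.zero_le _) (Nat.sub_le _ _)
  have hpow : x ^ (a * (a - 1) / 2) = ∏ j ∈ Finset.range a, x ^ j := by
    rw [Finset.prod_pow_eq_pow_sum, Finset.sum_range_id]
  have hre : ∏ i ∈ Finset.Ioc (e - a) e, (x ^ i + 1) =
      ∏ j ∈ Finset.range a, (x ^ (e - j) + 1) := by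
    apply Finset.prod_nbij' (fun i => e - i) (fun j => e - j)
    · intro i hi
      simp only [Finset.mem_Ioc] at hi
      simp only [Finset.mem_range]
      omega
    · intro j hj
      simp only [Finset.mem_range] at hj
      simp only [Finset.mem_Ioc]
      omega
    · intro i hi
      simp only [Finset.mem_Ioc] at hi
      omega
    · intro j hj
      simp only [Finset.mem_range] at hj
      omega
    · intro i hi
      simp only [Finset.mem_Ioc] at hi
      congr 2
      omega
  have hkey : ∏ j ∈ Finset.range a, (x ^ j * (x ^ (e - j) + 1)) =
      ∏ j ∈ Finset.range a, (x ^ j + 1) := by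
    apply Finset.prod_congr rfl
    intro j hj
    simp only [Finset.mem_range] at hj
    rw [mul_add, mul_one, ← pow_add, Nat.add_sub_cancel' (by omega : j ≤ e), hxe]
    ring
  have hrange : Finset.range a = insert 0 (Finset.Ioc 0 (a - 1)) := by
    ext i
    simp only [Finset.mem_range, Finset.mem_insert, Finset.mem_Ioc]
    omega
  calc x ^ (a * (a - 1) / 2) * ∏ i ∈ Finset.Icc 1 e, (x ^ i + 1)
      = (∏ i ∈ Finset.Ioc 0 (e - a), (x ^ i + 1)) *
        ((∏ j ∈ Finset.range a, x ^ j) * ∏ j ∈ Finset.range a, (x ^ (e - j) + 1)) := by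
        rw [← hsplit, hpow, hre]; ring
    _ = (∏ i ∈ Finset.Ioc 0 (e - a), (x ^ i + 1)) *
        ∏ j ∈ Finset.range a, (x ^ j + 1) := by rw [← Finset.prod_mul_distrib, hkey]
    _ = (∏ i ∈ Finset.Ioc 0 (e - a), (x ^ i + 1)) *
        ((x ^ 0 + 1) * ∏ j ∈ Finset.Ioc 0 (a - 1), (x ^ j + 1)) := by
        rw [hrange, Finset.prod_insert (by simp)]
    _ = (x ^ e + 1) * (∏ i ∈ Finset.Icc 1 (a - 1), (x ^ i + 1)) *
        ∏ i ∈ Finset.Icc 1 (e - a), (x ^ i + 1) := by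
        rw [hxe, pow_zero, ← Finset.Icc_add_one_left_eq_Ioc, ← Finset.Icc_add_one_left_eq_Ioc]
        ring
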